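/- The function Q(k) = √(−(k+ia) tanh(k+ia)) on ℝ (for fixed a with 0 ≤ a < π/4) satisfies a weighted Lipschitz estimate: there is a constant K such that for all real k, k̂, |Q(k) − Q(k̂)| ≤ K |k − k̂| / max(1, |k̂ + ia|^{1/2}). -/

import Mathlib

open Real Complex

noncomputable def Complex.abs : AbsoluteValue ℂ ℝ := NormedField.toAbsoluteValue ℂ

lemma Complex.abs_apply (z : ℂ) : Complex.abs z = Real.sqrt (Complex.normSq z) := Complex.norm_def z

lemma Complex.abs_re_le_abs (z : ℂ) : |z.re| ≤ Complex.abs z := Complex.abs_re_le_norm z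

lemma Complex.abs_im_le_abs (z : ℂ) : |z.im| ≤ Complex.abs z := Complex.abs_im_le_norm z

lemma Complex.re_le_abs (z : ℂ) : z.re ≤ Complex.abs z := Complex.re_le_norm z

lemma Complex.sq_abs (z : ℂ) : Complex.abs z ^ 2 = Complex.normSq z := Complex.sq_norm z

lemma Complex.abs_ofReal (x : ℝ) : Complex.abs (x : ℂ) = |x| := Complex.norm_real x

lemma Complex.abs_I : Complex.abs Complex.I = 1 := Complex.norm_I

lemma Complex.abs_cpow_real (x : ℂ) (y : ℝ) : Complex.abs (x ^ (y : ℂ)) = Complex.abs x ^ y :=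
  Complex.norm_cpow_real x y

-- real helpers
lemma sinh_le_mul_cosh {x : ℝ} (hx : 0 ≤ x) : Real.sinh x ≤ x * Real.cosh x := by
  have h : MonotoneOn (fun x : ℝ => x * Real.cosh x - Real.sinh x) (Set.Ici 0) := by
    apply monotoneOn_of_deriv_nonneg (convex_Ici _)
    · exact ((continuous_id.mul Real.continuous_cosh).sub Real.continuous_sinh).continuousOn
    · intro t ht
      have : DifferentiableAt ℝ (fun x : ℝ => x * Real.cosh x - Real.sinh x) t := by
        fun_prop
      exact this.differentiableWithinAt
    · intro t ht
      rw [interior_Ici, Set.mem_Ioi] at ht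
      have hd : deriv (fun x : ℝ => x * Real.cosh x - Real.sinh x) t = t * Real.sinh t := by
        have h1 : HasDerivAt (fun x : ℝ => x * Real.cosh x - Real.sinh x)
            (1 * Real.cosh t + t * Real.sinh t - Real.cosh t) t := by
          exact ((hasDerivAt_id t).mul (Real.hasDerivAt_cosh t)).sub (Real.hasDerivAt_sinh t)
        rw [h1.deriv]; ring
      rw [hd]
      positivity
  have := h (Set.self_mem_Ici) (Set.mem_Ici.2 hx) hx
  simp at this
  linarith

lemma abs_sinh_le (x : ℝ) : |Real.sinh x| ≤ |x| * Real.cosh x := by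
  rw [Real.abs_sinh, ← Real.cosh_abs]
  exact sinh_le_mul_cosh (abs_nonneg x)

lemma cosh_sub_le (x y : ℝ) : Real.cosh (x - y) ≤ 2 * (Real.cosh x * Real.cosh y) := by
  rw [Real.cosh_sub]
  have hx : |Real.sinh x| ≤ Real.cosh x := by
    rw [Real.abs_sinh, ← Real.cosh_abs]; exact (Real.sinh_lt_cosh _).le
  have hy : |Real.sinh y| ≤ Real.cosh y := by
    rw [Real.abs_sinh, ← Real.cosh_abs]; exact (Real.sinh_lt_cosh _).le
  have h1 : |Real.sinh x * Real.sinh y| ≤ Real.cosh x * Real.cosh y := by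
    rw [abs_mul]
    exact mul_le_mul hx hy (abs_nonneg _) ((abs_nonneg _).trans hx)
  have h2 := neg_abs_le (Real.sinh x * Real.sinh y)
  linarith

lemma cosh_le_exp_abs (x : ℝ) : Real.cosh x ≤ Real.exp |x| := by
  rw [Real.cosh_eq]
  have h1 : Real.exp x ≤ Real.exp |x| := Real.exp_le_exp.2 (le_abs_self x)
  have h2 : Real.exp (-x) ≤ Real.exp |x| := Real.exp_le_exp.2 (neg_le_abs x)
  linarith

lemma exp_abs_le_cosh (x : ℝ) : Real.exp |x| ≤ 2 * Real.cosh x := by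
  rw [← Real.cosh_abs, Real.cosh_eq]
  have := Real.exp_pos (-|x|)
  linarith

noncomputable def csqrt (u : ℂ) : ℂ := u ^ ((1:ℂ)/2)

lemma csqrt_mul_self (u : ℂ) : csqrt u * csqrt u = u := by
  unfold csqrt
  rcases eq_or_ne u 0 with rfl | hu
  · rw [Complex.zero_cpow (by norm_num : (1:ℂ)/2 ≠ 0)]; simp
  · rw [← Complex.cpow_add _ _ hu]
    norm_num

lemma abs_csqrt (u : ℂ) : Complex.abs (csqrt u) = Real.sqrt (Complex.abs u) := by
  unfold csqrt
  rw [show ((1:ℂ)/2) = ((1/2 : ℝ) : ℂ) by norm_num, Complex.abs_cpow_real,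
    Real.sqrt_eq_rpow]

lemma csqrt_re (u : ℂ) : (csqrt u).re = Real.sqrt ((Complex.abs u + u.re) / 2) := by
  unfold csqrt
  rw [show ((1:ℂ)/2) = (2⁻¹ : ℂ) by norm_num]
  exact Complex.cpow_inv_two_re u

lemma csqrt_im_of_nonneg {u : ℂ} (h : 0 ≤ u.im) :
    (csqrt u).im = Real.sqrt ((Complex.abs u - u.re) / 2) := by
  unfold csqrt
  rw [show ((1:ℂ)/2) = (2⁻¹ : ℂ) by norm_num]
  exact Complex.cpow_inv_two_im_eq_sqrt h

lemma csqrt_im_of_neg {u : ℂ} (h : u.im < 0) :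
    (csqrt u).im = -Real.sqrt ((Complex.abs u - u.re) / 2) := by
  unfold csqrt
  rw [show ((1:ℂ)/2) = (2⁻¹ : ℂ) by norm_num]
  exact Complex.cpow_inv_two_im_eq_neg_sqrt h

lemma csqrt_re_nonneg (u : ℂ) : 0 ≤ (csqrt u).re := by
  rw [csqrt_re]; exact Real.sqrt_nonneg _

lemma sq_csqrt_re (u : ℂ) : (csqrt u).re ^ 2 = (Complex.abs u + u.re) / 2 := by
  rw [csqrt_re]
  exact Real.sq_sqrt (by nlinarith [Complex.abs_re_le_abs u, neg_abs_le u.re, abs_le_abs (le_refl u.re)] )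

lemma csqrt_re_ge_of_re_nonneg {u : ℂ} (h : 0 ≤ u.re) :
    Real.sqrt (u.re / 2) ≤ (csqrt u).re := by
  rw [csqrt_re]
  apply Real.sqrt_le_sqrt
  have := Complex.abs.nonneg u
  linarith

lemma csqrt_re_ge_im_div {u : ℂ} :
    |u.im| / (2 * Real.sqrt (Complex.abs u)) ≤ (csqrt u).re := by
  rcases eq_or_ne u 0 with rfl | hu
  · simp [csqrt_re_nonneg]
  have habs : 0 < Complex.abs u := Complex.abs.pos hu
  have hs : 0 < Real.sqrt (Complex.abs u) := Real.sqrt_pos.2 habs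
  rw [div_le_iff₀ (by positivity)]
  -- square both sides
  have h1 : ((csqrt u).re * (2 * Real.sqrt (Complex.abs u)))^2 = ((Complex.abs u + u.re)/2) * (4 * Complex.abs u) := by
    rw [mul_pow, sq_csqrt_re, mul_pow, Real.sq_sqrt habs.le]; ring
  have key : |u.im|^2 ≤ ((Complex.abs u + u.re)/2) * (4 * Complex.abs u) := by
    have hsq : Complex.abs u ^ 2 = u.re^2 + u.im^2 := by
      rw [Complex.sq_abs, Complex.normSq_apply]; ring
    have hre : |u.re| ≤ Complex.abs u := Complex.abs_re_le_abs u
    rw [_root_.sq_abs]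
    nlinarith [abs_nonneg u.re, neg_abs_le u.re, habs]
  have h2 : 0 ≤ (csqrt u).re * (2 * Real.sqrt (Complex.abs u)) := by
    have := csqrt_re_nonneg u; positivity
  nlinarith [abs_nonneg u.im]

lemma csqrt_im_nonneg_of_im_nonneg {u : ℂ} (h : 0 ≤ u.im) : 0 ≤ (csqrt u).im := by
  rw [csqrt_im_of_nonneg h]; exact Real.sqrt_nonneg _

lemma csqrt_im_nonpos {u : ℂ} (h : u.im < 0 ∨ (u.im = 0 ∧ 0 ≤ u.re)) : (csqrt u).im ≤ 0 := by
  rcases h with h' | ⟨h1, h2⟩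
  · rw [csqrt_im_of_neg h']
    exact neg_nonpos.2 (Real.sqrt_nonneg _)
  · rw [csqrt_im_of_nonneg h1.ge]
    have : Complex.abs u = u.re := by
      rw [Complex.abs_apply, Complex.normSq_apply, h1, mul_zero, add_zero,
        Real.sqrt_mul_self h2]
    rw [this]
    simp

lemma csqrt_im_nonneg_of {u : ℂ} (h : 0 < u.im ∨ (u.im = 0 ∧ 0 ≤ u.re) ∨ 0 ≤ u.im) : 0 ≤ (csqrt u).im := by
  rcases h with h | h | h
  · exact csqrt_im_nonneg_of_im_nonneg h.le
  · exact csqrt_im_nonneg_of_im_nonneg h.1.ge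
  · exact csqrt_im_nonneg_of_im_nonneg h

lemma abs_add_ge_of_sign {u v : ℂ} (hu : 0 ≤ u.re) (hv : 0 ≤ v.re)
    (him : 0 ≤ u.im * v.im) : Complex.abs v ≤ Complex.abs (u + v) := by
  have h1 : Complex.abs v ^ 2 ≤ Complex.abs (u + v) ^ 2 := by
    rw [Complex.sq_abs, Complex.sq_abs, Complex.normSq_apply, Complex.normSq_apply]
    simp only [Complex.add_re, Complex.add_im]
    nlinarith [sq_nonneg u.re, sq_nonneg u.im]
  have := Complex.abs.nonneg (u + v)
  nlinarith [Complex.abs.nonneg v]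

lemma csqrt_diff_mul (u v : ℂ) :
    Complex.abs (csqrt u - csqrt v) * Complex.abs (csqrt u + csqrt v) = Complex.abs (u - v) := by
  rw [← map_mul]
  congr 1
  have hu := csqrt_mul_self u
  have hv := csqrt_mul_self v
  ring_nf
  linear_combination hu - hv

lemma csqrt_diff_le {u v : ℂ} (h : csqrt u + csqrt v ≠ 0) :
    Complex.abs (csqrt u - csqrt v) = Complex.abs (u - v) / Complex.abs (csqrt u + csqrt v) := by
  rw [eq_div_iff (by simpa using h)]
  exact csqrt_diff_mul u v

lemma csqrt_neg_real {x : ℝ} (hx : x ≤ 0) :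
    csqrt (x : ℂ) = Complex.I * (Real.sqrt (-x) : ℂ) := by
  have habs : Complex.abs (x:ℂ) = -x := by rw [Complex.abs_ofReal, abs_of_nonpos hx]
  apply Complex.ext
  · rw [csqrt_re, habs]
    simp
  · rw [csqrt_im_of_nonneg (by simp), habs]
    rw [show (-x - (x:ℂ).re)/2 = -x by simp; ring]
    simp

lemma sinh_z (a k : ℝ) : Complex.sinh ((k:ℂ) + a*Complex.I) =
    ((Real.sinh k * Real.cos a : ℝ) : ℂ) + ((Real.cosh k * Real.sin a : ℝ) : ℂ) * Complex.I := by
  rw [Complex.sinh_add, Complex.sinh_mul_I, Complex.cosh_mul_I]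
  push_cast
  ring

lemma cosh_z (a k : ℝ) : Complex.cosh ((k:ℂ) + a*Complex.I) =
    ((Real.cosh k * Real.cos a : ℝ) : ℂ) + ((Real.sinh k * Real.sin a : ℝ) : ℂ) * Complex.I := by
  rw [Complex.cosh_add, Complex.sinh_mul_I, Complex.cosh_mul_I]
  push_cast
  ring

lemma normSq_sinh_z (a k : ℝ) : Complex.normSq (Complex.sinh ((k:ℂ) + a*Complex.I)) =
    Real.sinh k ^ 2 + Real.sin a ^ 2 := by
  rw [sinh_z, Complex.normSq_apply]
  simp [Complex.sin_ofReal_re, Complex.cos_ofReal_re, Complex.sinh_ofReal_re, Complex.cosh_ofReal_re]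
  have c1 := Real.sin_sq_add_cos_sq a
  have c2 := Real.cosh_sq k
  nlinarith [c1, c2]

lemma normSq_cosh_z (a k : ℝ) : Complex.normSq (Complex.cosh ((k:ℂ) + a*Complex.I)) =
    Real.cosh k ^ 2 - Real.sin a ^ 2 := by
  rw [cosh_z, Complex.normSq_apply]
  simp [Complex.sin_ofReal_re, Complex.cos_ofReal_re, Complex.sinh_ofReal_re, Complex.cosh_ofReal_re]
  have c1 := Real.sin_sq_add_cos_sq a
  have c2 := Real.cosh_sq k
  nlinarith [c1, c2]

lemma sin_sq_le_half {a : ℝ} (ha0 : 0 ≤ a) (ha : a < π/4) : Real.sin a ^ 2 ≤ 1/2 := by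
  have h1 : Real.sin a ≤ Real.sin (π/4) := by
    apply Real.sin_le_sin_of_le_of_le_pi_div_two (by linarith [Real.pi_pos]) (by linarith [Real.pi_pos]) ha.le
  have h2 : 0 ≤ Real.sin a := Real.sin_nonneg_of_nonneg_of_le_pi ha0 (by nlinarith [Real.pi_pos, Real.pi_le_four])
  rw [Real.sin_pi_div_four] at h1
  nlinarith [Real.sq_sqrt (by norm_num : (0:ℝ) ≤ 2)]

lemma sin_a_nonneg {a : ℝ} (ha0 : 0 ≤ a) (ha : a < π/4) : 0 ≤ Real.sin a :=
  Real.sin_nonneg_of_nonneg_of_le_pi ha0 (by nlinarith [Real.pi_pos, Real.pi_le_four])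

lemma normSq_cosh_pos {a : ℝ} (ha0 : 0 ≤ a) (ha : a < π/4) (k : ℝ) :
    Real.cosh k ^2 / 2 ≤ Complex.normSq (Complex.cosh ((k:ℂ) + a*Complex.I)) := by
  rw [normSq_cosh_z]
  have := sin_sq_le_half ha0 ha
  have := Real.one_le_cosh k
  nlinarith

lemma abs_cosh_z_pos {a : ℝ} (ha0 : 0 ≤ a) (ha : a < π/4) (k : ℝ) :
    0 < Complex.abs (Complex.cosh ((k:ℂ) + a*Complex.I)) := by
  rw [Complex.abs_apply]
  have h2 := normSq_cosh_pos ha0 ha k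
  have hc := Real.one_le_cosh k
  apply Real.sqrt_pos.2
  nlinarith

lemma cosh_z_ne_zero {a : ℝ} (ha0 : 0 ≤ a) (ha : a < π/4) (k : ℝ) :
    Complex.cosh ((k:ℂ) + a*Complex.I) ≠ 0 := by
  intro h
  have h2 := abs_cosh_z_pos ha0 ha k
  rw [h] at h2
  simp at h2

lemma abs_cosh_z_ge {a : ℝ} (ha0 : 0 ≤ a) (ha : a < π/4) (k : ℝ) :
    Real.cosh k / Real.sqrt 2 ≤ Complex.abs (Complex.cosh ((k:ℂ) + a*Complex.I)) := by
  rw [Complex.abs_apply]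
  have h2 := normSq_cosh_pos ha0 ha k
  have hc := Real.one_le_cosh k
  have key : Real.cosh k / Real.sqrt 2 = Real.sqrt (Real.cosh k ^2 / 2) := by
    rw [show Real.cosh k ^2 / 2 = (Real.cosh k / Real.sqrt 2)^2 by
      rw [div_pow, Real.sq_sqrt (by norm_num : (0:ℝ) ≤ 2)]]
    rw [Real.sqrt_sq (by positivity)]
  rw [key]
  exact Real.sqrt_le_sqrt h2

lemma abs_tanh_z_le {a : ℝ} (ha0 : 0 ≤ a) (ha : a < π/4) (k : ℝ) :
    Complex.abs (Complex.tanh ((k:ℂ) + a*Complex.I)) ≤ 1 := by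
  rw [Complex.tanh_eq_sinh_div_cosh, map_div₀]
  rw [div_le_one (abs_cosh_z_pos ha0 ha k)]
  rw [Complex.abs_apply, Complex.abs_apply]
  apply Real.sqrt_le_sqrt
  rw [normSq_sinh_z, normSq_cosh_z]
  have := sin_sq_le_half ha0 ha
  have := Real.cosh_sq k
  nlinarith

lemma abs_tanh_z_ge {a : ℝ} (ha0 : 0 ≤ a) (ha : a < π/4) (k : ℝ) :
    Real.sin a ≤ Complex.abs (Complex.tanh ((k:ℂ) + a*Complex.I)) := by
  have hs : 0 ≤ Real.sin a := sin_a_nonneg ha0 ha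
  rw [Complex.tanh_eq_sinh_div_cosh, map_div₀]
  rw [le_div_iff₀ (abs_cosh_z_pos ha0 ha k)]
  rw [Complex.abs_apply, Complex.abs_apply, ← Real.sqrt_mul_self hs,
    ← Real.sqrt_mul (by positivity)]
  apply Real.sqrt_le_sqrt
  rw [normSq_sinh_z, normSq_cosh_z]
  have h1 := sin_sq_le_half ha0 ha
  have h2 := Real.cosh_sq k
  have h3 : Real.sin a * Real.sin a = Real.sin a ^2 := by ring
  nlinarith [sq_nonneg (Real.sin a), sq_nonneg (Real.sinh k)]

lemma tanh_z_re {a : ℝ} (ha0 : 0 ≤ a) (ha : a < π/4) (k : ℝ) :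
    (Complex.tanh ((k:ℂ)+a*Complex.I)).re
      = Real.sinh k * Real.cosh k / (Real.cosh k^2 - Real.sin a^2) := by
  have hN : (0:ℝ) < Real.cosh k^2 - Real.sin a^2 := by
    nlinarith [sin_sq_le_half ha0 ha, Real.one_le_cosh k]
  rw [Complex.tanh_eq_sinh_div_cosh, Complex.div_re, normSq_cosh_z, sinh_z, cosh_z]
  simp [Complex.sin_ofReal_re, Complex.cos_ofReal_re, Complex.sinh_ofReal_re, Complex.cosh_ofReal_re]
  field_simp
  linear_combination (Real.sinh k) * Real.sin_sq_add_cos_sq a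

lemma tanh_z_im {a : ℝ} (ha0 : 0 ≤ a) (ha : a < π/4) (k : ℝ) :
    (Complex.tanh ((k:ℂ)+a*Complex.I)).im
      = Real.sin a * Real.cos a / (Real.cosh k^2 - Real.sin a^2) := by
  have hN : (0:ℝ) < Real.cosh k^2 - Real.sin a^2 := by
    nlinarith [sin_sq_le_half ha0 ha, Real.one_le_cosh k]
  rw [Complex.tanh_eq_sinh_div_cosh, Complex.div_im, normSq_cosh_z, sinh_z, cosh_z]
  simp [Complex.sin_ofReal_re, Complex.cos_ofReal_re, Complex.sinh_ofReal_re, Complex.cosh_ofReal_re]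
  field_simp
  linear_combination (Real.sin a * Real.cos a) * Real.cosh_sq_sub_sinh_sq k

lemma w_re {a : ℝ} (ha0 : 0 ≤ a) (ha : a < π/4) (k : ℝ) :
    ((-((k:ℂ) + a*Complex.I)) * Complex.tanh ((k:ℂ)+a*Complex.I)).re
      = (a * Real.sin a * Real.cos a - k * Real.sinh k * Real.cosh k)
        / (Real.cosh k^2 - Real.sin a^2) := by
  have hN : (0:ℝ) < Real.cosh k^2 - Real.sin a^2 := by
    nlinarith [sin_sq_le_half ha0 ha, Real.one_le_cosh k]
  rw [Complex.mul_re, tanh_z_re ha0 ha, tanh_z_im ha0 ha]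
  simp [Complex.sin_ofReal_re, Complex.cos_ofReal_re, Complex.sinh_ofReal_re, Complex.cosh_ofReal_re]
  field_simp
  ring

lemma w_im {a : ℝ} (ha0 : 0 ≤ a) (ha : a < π/4) (k : ℝ) :
    ((-((k:ℂ) + a*Complex.I)) * Complex.tanh ((k:ℂ)+a*Complex.I)).im
      = -(k * Real.sin a * Real.cos a + a * Real.sinh k * Real.cosh k)
        / (Real.cosh k^2 - Real.sin a^2) := by
  have hN : (0:ℝ) < Real.cosh k^2 - Real.sin a^2 := by
    nlinarith [sin_sq_le_half ha0 ha, Real.one_le_cosh k]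
  rw [Complex.mul_im, tanh_z_re ha0 ha, tanh_z_im ha0 ha]
  simp [Complex.sin_ofReal_re, Complex.cos_ofReal_re, Complex.sinh_ofReal_re, Complex.cosh_ofReal_re]
  field_simp
  ring

lemma tanh_sub_complex {A B : ℂ} (hA : Complex.cosh A ≠ 0) (hB : Complex.cosh B ≠ 0) :
    Complex.tanh A - Complex.tanh B = Complex.sinh (A - B) / (Complex.cosh A * Complex.cosh B) := by
  rw [Complex.tanh_eq_sinh_div_cosh, Complex.tanh_eq_sinh_div_cosh, Complex.sinh_sub]
  field_simp
  try ring

lemma exp_half_le : Real.exp (1/2 : ℝ) ≤ 7/4 := by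
  have h := Real.exp_one_lt_d9
  have h2 : Real.exp (1/2 : ℝ) ^ 2 = Real.exp 1 := by
    rw [sq, ← Real.exp_add]
    norm_num
  nlinarith [Real.exp_pos (1/2 : ℝ)]

lemma key_exp_ineq {x : ℝ} (hx : 0 ≤ x) :
    (x + 1) * Real.exp ((1 + x)/2) ≤ 7 * (Real.exp x / 2) := by
  have e1 : Real.exp ((1+x)/2) = Real.exp (1/2) * Real.exp (x/2) := by
    rw [← Real.exp_add]; congr 1; ring
  have e2 : Real.exp x = Real.exp (x/2) * Real.exp (x/2) := by
    rw [← Real.exp_add]; norm_num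
  have e3 : x/2 + 1 ≤ Real.exp (x/2) := Real.add_one_le_exp _
  have e4 := Real.exp_pos (x/2)
  have e5 := exp_half_le
  have e6 := Real.exp_pos (1/2:ℝ)
  have e7 : x + 1 ≤ 2 * Real.exp (x/2) := by linarith
  have e8 : (x+1) * Real.exp (1/2:ℝ) ≤ (2 * Real.exp (x/2)) * (7/4) :=
    mul_le_mul e7 e5 e6.le (by positivity)
  rw [e1, e2]
  nlinarith [e8, e4]

lemma cosh_prod_ineq {a : ℝ} (ha0 : 0 ≤ a) {k khat : ℝ} (h : |k - khat| ≤ (1 + |khat|)/2) :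
    (|khat| + 1) * Real.cosh (k - khat) ≤ 7 * (Real.cosh k * Real.cosh khat) := by
  have h1 : Real.cosh (k - khat) ≤ Real.exp ((1 + |khat|)/2) := by
    calc Real.cosh (k - khat) ≤ Real.exp |k - khat| := cosh_le_exp_abs _
    _ ≤ Real.exp ((1 + |khat|)/2) := Real.exp_le_exp.2 h
  have h2 : Real.exp |khat| / 2 ≤ Real.cosh khat := by
    have := exp_abs_le_cosh khat; linarith
  have h3 := key_exp_ineq (abs_nonneg khat)
  have h4 : (1:ℝ) ≤ Real.cosh k := Real.one_le_cosh k
  have h5 : 0 < Real.cosh khat := Real.cosh_pos _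
  have h6 : 0 ≤ (|khat| + 1) := by positivity
  calc (|khat| + 1) * Real.cosh (k - khat) ≤ (|khat| + 1) * Real.exp ((1 + |khat|)/2) := by
        exact mul_le_mul_of_nonneg_left h1 h6
    _ ≤ 7 * (Real.exp |khat| / 2) := h3
    _ ≤ 7 * Real.cosh khat := by linarith
    _ ≤ 7 * (Real.cosh k * Real.cosh khat) := by nlinarith

lemma abs_z_le {a : ℝ} (ha0 : 0 ≤ a) (ha : a < π/4) (k : ℝ) :
    Complex.abs ((k:ℂ) + a*Complex.I) ≤ |k| + 1 := by
  have h1 : a < 1 := by nlinarith [Real.pi_le_four, Real.pi_pos]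
  calc Complex.abs ((k:ℂ) + a*Complex.I) ≤ Complex.abs (k:ℂ) + Complex.abs ((a:ℂ)*Complex.I) := Complex.abs.add_le _ _
    _ = |k| + a := by rw [Complex.abs_ofReal, map_mul, Complex.abs_I, Complex.abs_ofReal, mul_one, _root_.abs_of_nonneg ha0]
    _ ≤ |k| + 1 := by linarith

lemma abs_k_le_abs_z (a k : ℝ) : |k| ≤ Complex.abs ((k:ℂ) + a*Complex.I) := by
  have := Complex.abs_re_le_abs ((k:ℂ) + a*Complex.I)
  simpa using this

lemma a_le_abs_z {a : ℝ} (ha0 : 0 ≤ a) (k : ℝ) : a ≤ Complex.abs ((k:ℂ) + a*Complex.I) := by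
  have := Complex.abs_im_le_abs ((k:ℂ) + a*Complex.I)
  simp at this
  rwa [_root_.abs_of_nonneg ha0] at this

lemma w_diff_bound {a : ℝ} (ha0 : 0 ≤ a) (ha : a < π/4) {k khat : ℝ}
    (h : |k - khat| ≤ (1 + |khat|)/2) :
    Complex.abs ((-((k:ℂ) + a*Complex.I)) * Complex.tanh ((k:ℂ)+a*Complex.I)
      - (-((khat:ℂ) + a*Complex.I)) * Complex.tanh ((khat:ℂ)+a*Complex.I)) ≤ 15 * |k - khat| := by
  set z : ℂ := (k:ℂ) + a*Complex.I with hz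
  set zh : ℂ := (khat:ℂ) + a*Complex.I with hzh
  have hsplit : (-z) * Complex.tanh z - (-zh) * Complex.tanh zh
      = -((z - zh) * Complex.tanh z) - zh * (Complex.tanh z - Complex.tanh zh) := by ring
  have hzz : z - zh = ((k - khat : ℝ) : ℂ) := by rw [hz, hzh]; push_cast; ring
  have hcz := cosh_z_ne_zero ha0 ha k
  have hczh := cosh_z_ne_zero ha0 ha khat
  rw [hsplit]
  have htri : Complex.abs (-((z - zh) * Complex.tanh z) - zh * (Complex.tanh z - Complex.tanh zh))
      ≤ Complex.abs ((z - zh) * Complex.tanh z) + Complex.abs (zh * (Complex.tanh z - Complex.tanh zh)) := by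
    have h0 := Complex.abs.sub_le_add (-((z - zh) * Complex.tanh z)) (zh * (Complex.tanh z - Complex.tanh zh))
    rwa [AbsoluteValue.map_neg] at h0
  have hterm1 : Complex.abs ((z - zh) * Complex.tanh z) ≤ |k - khat| := by
    rw [map_mul, hzz, Complex.abs_ofReal]
    have := abs_tanh_z_le ha0 ha k
    nlinarith [Complex.abs.nonneg (Complex.tanh z), abs_nonneg (k - khat)]
  -- term 2
  set Cz := Complex.abs (Complex.cosh z) with hCz
  set Czh := Complex.abs (Complex.cosh zh) with hCzh
  have hCzpos : 0 < Cz := abs_cosh_z_pos ha0 ha k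
  have hCzhpos : 0 < Czh := abs_cosh_z_pos ha0 ha khat
  have hT : Complex.abs (Complex.tanh z - Complex.tanh zh)
      = |Real.sinh (k - khat)| / (Cz * Czh) := by
    rw [tanh_sub_complex hcz hczh, map_div₀, map_mul, hzz, ← Complex.ofReal_sinh, Complex.abs_ofReal]
  have hprod : Real.cosh k * Real.cosh khat / 2 ≤ Cz * Czh := by
    have g1 := abs_cosh_z_ge ha0 ha k
    have g2 := abs_cosh_z_ge ha0 ha khat
    have hs2 : (0:ℝ) < Real.sqrt 2 := by positivity
    have hsq : Real.sqrt 2 * Real.sqrt 2 = 2 := Real.mul_self_sqrt (by norm_num)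
    have c1 : (0:ℝ) < Real.cosh k := Real.cosh_pos _
    have c2 : (0:ℝ) < Real.cosh khat := Real.cosh_pos _
    have : Real.cosh k / Real.sqrt 2 * (Real.cosh khat / Real.sqrt 2) ≤ Cz * Czh := by
      apply mul_le_mul g1 g2 (by positivity) hCzpos.le
    calc Real.cosh k * Real.cosh khat / 2
        = Real.cosh k / Real.sqrt 2 * (Real.cosh khat / Real.sqrt 2) := by
          rw [div_mul_div_comm, hsq]
      _ ≤ Cz * Czh := this
  have hterm2 : Complex.abs (zh * (Complex.tanh z - Complex.tanh zh)) ≤ 14 * |k - khat| := by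
    rw [map_mul, hT]
    have hzhabs : Complex.abs zh ≤ |khat| + 1 := abs_z_le ha0 ha khat
    have hsinh : |Real.sinh (k - khat)| ≤ |k - khat| * Real.cosh (k - khat) := abs_sinh_le _
    have hD : (0:ℝ) < Real.cosh k * Real.cosh khat := by positivity
    have hkey := cosh_prod_ineq ha0 h
    -- abs zh * (|sinh|/(Cz*Czh)) ≤ (|khat|+1) * (|h| cosh h)/(cosh k cosh khat /2)
    have step1 : |Real.sinh (k - khat)| / (Cz * Czh)
        ≤ (|k - khat| * Real.cosh (k - khat)) / (Real.cosh k * Real.cosh khat / 2) := by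
      apply div_le_div₀ (by positivity) hsinh (by positivity) hprod
    have step2 : Complex.abs zh * (|Real.sinh (k - khat)| / (Cz * Czh))
        ≤ (|khat| + 1) * ((|k - khat| * Real.cosh (k - khat)) / (Real.cosh k * Real.cosh khat / 2)) := by
      apply mul_le_mul hzhabs step1 (by positivity) (by positivity)
    refine step2.trans ?_
    have hre : (|khat| + 1) * (|k - khat| * Real.cosh (k - khat) / (Real.cosh k * Real.cosh khat / 2))
        = |k - khat| * ((|khat| + 1) * Real.cosh (k - khat)) / (Real.cosh k * Real.cosh khat / 2) := by
      ring
    rw [hre, div_le_iff₀ (by positivity : (0:ℝ) < Real.cosh k * Real.cosh khat / 2)]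
    have := mul_le_mul_of_nonneg_left hkey (abs_nonneg (k - khat))
    nlinarith [this]
  calc Complex.abs (-((z - zh) * Complex.tanh z) - zh * (Complex.tanh z - Complex.tanh zh))
      ≤ |k - khat| + 14 * |k - khat| := by linarith [htri, hterm1, hterm2]
    _ = 15 * |k - khat| := by ring

lemma cos_a_pos {a : ℝ} (ha0 : 0 ≤ a) (ha : a < π/4) : 0 < Real.cos a := by
  apply Real.cos_pos_of_mem_Ioo
  constructor
  · linarith [Real.pi_pos]
  · linarith [Real.pi_pos]

lemma N_pos {a : ℝ} (ha0 : 0 ≤ a) (ha : a < π/4) (k : ℝ) :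
    (0:ℝ) < Real.cosh k^2 - Real.sin a^2 := by
  nlinarith [sin_sq_le_half ha0 ha, Real.one_le_cosh k]

lemma w_im_sign_nonneg_k {a : ℝ} (ha0 : 0 < a) (ha : a < π/4) {k : ℝ} (hk : 0 ≤ k) :
    ((-((k:ℂ) + a*Complex.I)) * Complex.tanh ((k:ℂ)+a*Complex.I)).im < 0 ∨
    (((-((k:ℂ) + a*Complex.I)) * Complex.tanh ((k:ℂ)+a*Complex.I)).im = 0 ∧
      0 ≤ ((-((k:ℂ) + a*Complex.I)) * Complex.tanh ((k:ℂ)+a*Complex.I)).re) := by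
  have hN := N_pos ha0.le ha k
  have hsin := sin_a_nonneg ha0.le ha
  have hcos := cos_a_pos ha0.le ha
  have hsin' : 0 < Real.sin a := Real.sin_pos_of_pos_of_lt_pi ha0 (by nlinarith [Real.pi_pos, Real.pi_le_four])
  rw [w_im ha0.le ha, w_re ha0.le ha]
  rcases eq_or_lt_of_le hk with rfl | hk'
  · right
    constructor
    · simp
    · simp
      apply div_nonneg (by positivity)
      nlinarith [sin_sq_le_half ha0.le ha, Real.one_le_cosh (0:ℝ)]
  · left
    have h1 : 0 < Real.sinh k := by simp [hk']
    have h2 : 0 < Real.cosh k := Real.cosh_pos _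
    have hnum : 0 < k * Real.sin a * Real.cos a + a * Real.sinh k * Real.cosh k := by positivity
    rw [neg_div]
    simp only [neg_neg, Left.neg_neg_iff]
    positivity

lemma w_im_sign_nonpos_k {a : ℝ} (ha0 : 0 ≤ a) (ha : a < π/4) {k : ℝ} (hk : k ≤ 0) :
    0 ≤ ((-((k:ℂ) + a*Complex.I)) * Complex.tanh ((k:ℂ)+a*Complex.I)).im := by
  have hN := N_pos ha0 ha k
  have hsin := sin_a_nonneg ha0 ha
  have hcos := cos_a_pos ha0 ha
  rw [w_im ha0 ha]
  have h1 : Real.sinh k ≤ 0 := by simp [hk]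
  have h2 : 0 < Real.cosh k := Real.cosh_pos _
  have hnum : k * Real.sin a * Real.cos a + a * Real.sinh k * Real.cosh k ≤ 0 := by
    have : k * (Real.sin a * Real.cos a) ≤ 0 := mul_nonpos_of_nonpos_of_nonneg hk (by positivity)
    have h3 : a * (Real.sinh k * Real.cosh k) ≤ 0 :=
      mul_nonpos_of_nonneg_of_nonpos ha0 (mul_nonpos_of_nonpos_of_nonneg h1 h2.le)
    nlinarith
  rw [neg_div]
  simp only [Left.nonneg_neg_iff]
  exact div_nonpos_of_nonpos_of_nonneg hnum hN.le

lemma abs_w_le {a : ℝ} (ha0 : 0 ≤ a) (ha : a < π/4) (k : ℝ) :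
    Complex.abs ((-((k:ℂ) + a*Complex.I)) * Complex.tanh ((k:ℂ)+a*Complex.I)) ≤ |k| + 1 := by
  rw [map_mul, AbsoluteValue.map_neg]
  calc Complex.abs ((k:ℂ) + a*Complex.I) * Complex.abs (Complex.tanh ((k:ℂ)+a*Complex.I))
      ≤ (|k| + 1) * 1 := by
        apply mul_le_mul (abs_z_le ha0 ha k) (abs_tanh_z_le ha0 ha k) (Complex.abs.nonneg _) (by positivity)
    _ = |k| + 1 := by ring

lemma abs_w_ge {a : ℝ} (ha0 : 0 ≤ a) (ha : a < π/4) (k : ℝ) :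
    Real.sin a * (a * (1+|k|) / (1+a)) ≤
      Complex.abs ((-((k:ℂ) + a*Complex.I)) * Complex.tanh ((k:ℂ)+a*Complex.I)) := by
  rw [map_mul, AbsoluteValue.map_neg]
  have hz1 : a ≤ Complex.abs ((k:ℂ) + a*Complex.I) := a_le_abs_z ha0 k
  have hz2 : |k| ≤ Complex.abs ((k:ℂ) + a*Complex.I) := abs_k_le_abs_z a k
  have hz : a * (1+|k|) / (1+a) ≤ Complex.abs ((k:ℂ) + a*Complex.I) := by
    rw [div_le_iff₀ (by linarith : (0:ℝ) < 1 + a)]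
    nlinarith [abs_nonneg k]
  have hs := sin_a_nonneg ha0 ha
  calc Real.sin a * (a * (1+|k|) / (1+a))
      ≤ Complex.abs (Complex.tanh ((k:ℂ)+a*Complex.I)) * Complex.abs ((k:ℂ) + a*Complex.I) := by
        apply mul_le_mul (abs_tanh_z_ge ha0 ha k) hz (by positivity) (Complex.abs.nonneg _)
    _ = Complex.abs ((k:ℂ) + a*Complex.I) * Complex.abs (Complex.tanh ((k:ℂ)+a*Complex.I)) := by ring

lemma cosh_le_two {k : ℝ} (hk : |k| ≤ 1) : Real.cosh k ≤ 2 := by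
  have h1 : Real.cosh k ≤ Real.cosh 1 := by
    rw [Real.cosh_le_cosh]
    simpa using hk
  have h2 : Real.cosh 1 ≤ 2 := by
    rw [Real.cosh_eq]
    have := Real.exp_one_lt_d9
    have h3 : Real.exp (-1:ℝ) ≤ 1 := by
      rw [show (1:ℝ) = Real.exp 0 by simp]
      exact Real.exp_le_exp.2 (by norm_num)
    linarith
  linarith

/-- Lower bound for the real part of `csqrt (w k)` on `|k| ≤ 1`, `a > 0`. -/
lemma re_f_lower {a : ℝ} (ha0 : 0 < a) (ha : a < π/4) {k : ℝ} (hk : |k| ≤ 1) :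
    min (Real.sqrt (a * Real.sin a * Real.cos a / 16))
        (a * (a * Real.sin a * Real.cos a / 8) / 12)
      ≤ (csqrt ((-((k:ℂ) + a*Complex.I)) * Complex.tanh ((k:ℂ)+a*Complex.I))).re := by
  have ha1 : a < 1 := by nlinarith [Real.pi_le_four, Real.pi_pos]
  have hsin : 0 < Real.sin a := Real.sin_pos_of_pos_of_lt_pi ha0 (by nlinarith [Real.pi_pos, Real.pi_le_four])
  have hcos : 0 < Real.cos a := cos_a_pos ha0.le ha
  set δ : ℝ := a * Real.sin a * Real.cos a / 8 with hδ
  have hδpos : 0 < δ := by positivity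
  have hδle : δ ≤ 1/8 := by
    have h1 : Real.sin a ≤ 1 := Real.sin_le_one a
    have h2 : Real.cos a ≤ 1 := Real.cos_le_one a
    have e1 : a * Real.sin a ≤ 1 := by nlinarith
    have e2 : a * Real.sin a * Real.cos a ≤ 1 := by nlinarith
    rw [hδ]
    linarith
  have hN := N_pos ha0.le ha k
  have hNle : Real.cosh k^2 - Real.sin a^2 ≤ 4 := by
    nlinarith [cosh_le_two hk, Real.one_le_cosh k, sq_nonneg (Real.sin a)]
  have hNge : (1:ℝ)/2 ≤ Real.cosh k^2 - Real.sin a^2 := by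
    nlinarith [sin_sq_le_half ha0.le ha, Real.one_le_cosh k]
  rcases le_or_gt |k| δ with hcase | hcase
  · -- |k| ≤ δ : real part of w is large
    have hsinh : |Real.sinh k| ≤ 2 * δ := by
      have := abs_sinh_le k
      have hck : Real.cosh k ≤ 2 := cosh_le_two hk
      nlinarith [abs_nonneg k, Real.cosh_pos k, abs_sinh_le k]
    have hksc : |k * Real.sinh k * Real.cosh k| ≤ 4 * δ^2 := by
      rw [abs_mul, abs_mul, _root_.abs_of_nonneg (Real.cosh_pos k).le]
      have hck : Real.cosh k ≤ 2 := cosh_le_two hk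
      have h0 : 0 ≤ |k| := abs_nonneg k
      have h1 : 0 ≤ |Real.sinh k| := abs_nonneg _
      have t1 : |k| * |Real.sinh k| ≤ δ * (2*δ) := mul_le_mul hcase hsinh h1 hδpos.le
      have t2 : |k| * |Real.sinh k| * Real.cosh k ≤ (δ * (2*δ)) * 2 := by
        apply mul_le_mul t1 hck (Real.cosh_pos k).le (by positivity)
      nlinarith [t2]
    have hwre : δ ≤ ((-((k:ℂ) + a*Complex.I)) * Complex.tanh ((k:ℂ)+a*Complex.I)).re := by
      rw [w_re ha0.le ha]
      rw [le_div_iff₀ hN]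
      have h8 : a * Real.sin a * Real.cos a = 8 * δ := by rw [hδ]; ring
      have hub : |k * Real.sinh k * Real.cosh k| ≤ δ/2 := by
        have : 4 * δ^2 ≤ δ/2 := by nlinarith
        linarith
      have hmono : δ * (Real.cosh k^2 - Real.sin a^2) ≤ δ * 4 :=
        mul_le_mul_of_nonneg_left hNle hδpos.le
      have := neg_abs_le (k * Real.sinh k * Real.cosh k)
      linarith [le_abs_self (k * Real.sinh k * Real.cosh k)]
    refine le_trans (min_le_left _ _) ?_
    have h1 := csqrt_re_ge_of_re_nonneg (u := (-((k:ℂ) + a*Complex.I)) * Complex.tanh ((k:ℂ)+a*Complex.I)) (by linarith)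
    refine le_trans ?_ h1
    apply Real.sqrt_le_sqrt
    rw [show a * Real.sin a * Real.cos a / 16 = δ/2 by rw [hδ]; ring]
    linarith [hwre]
  · -- δ < |k| ≤ 1 : imaginary part of w is large
    have him : a * δ / 4 ≤ |((-((k:ℂ) + a*Complex.I)) * Complex.tanh ((k:ℂ)+a*Complex.I)).im| := by
      rw [w_im ha0.le ha, neg_div, abs_neg, abs_div]
      rw [_root_.abs_of_pos hN]
      rw [le_div_iff₀ hN]
      have hsame : |k * Real.sin a * Real.cos a + a * Real.sinh k * Real.cosh k|
          = |k| * Real.sin a * Real.cos a + a * |Real.sinh k| * Real.cosh k := by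
        have hcpos := Real.cosh_pos k
        rcases le_or_gt 0 k with hk0 | hk0
        · have hs0 : 0 ≤ Real.sinh k := Real.sinh_nonneg_iff.2 hk0
          have t1 : 0 ≤ k * Real.sin a * Real.cos a :=
            mul_nonneg (mul_nonneg hk0 hsin.le) hcos.le
          have t2 : 0 ≤ a * Real.sinh k * Real.cosh k :=
            mul_nonneg (mul_nonneg ha0.le hs0) hcpos.le
          rw [_root_.abs_of_nonneg hk0, _root_.abs_of_nonneg hs0, _root_.abs_of_nonneg (by linarith)]
        · have hs0 : Real.sinh k < 0 := Real.sinh_neg_iff.2 hk0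
          have t1 : k * Real.sin a * Real.cos a ≤ 0 :=
            mul_nonpos_of_nonpos_of_nonneg (mul_nonpos_of_nonpos_of_nonneg hk0.le hsin.le) hcos.le
          have t2 : a * Real.sinh k * Real.cosh k ≤ 0 :=
            mul_nonpos_of_nonpos_of_nonneg (mul_nonpos_of_nonneg_of_nonpos ha0.le hs0.le) hcpos.le
          have hsum : k * Real.sin a * Real.cos a + a * Real.sinh k * Real.cosh k ≤ 0 := by linarith
          rw [_root_.abs_of_neg hk0, _root_.abs_of_neg hs0, _root_.abs_of_nonpos hsum]
          ring
      rw [hsame]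
      have hsk : |k| ≤ |Real.sinh k| := by
        rw [Real.abs_sinh]
        exact Real.self_le_sinh_iff.2 (abs_nonneg k)
      have hck := Real.one_le_cosh k
      have : a * |k| ≤ a * (|Real.sinh k| * Real.cosh k) := by
        apply mul_le_mul_of_nonneg_left _ ha0.le
        nlinarith [abs_nonneg (Real.sinh k)]
      have t1 : a*δ/4 * (Real.cosh k^2 - Real.sin a^2) ≤ a*δ/4 * 4 :=
        mul_le_mul_of_nonneg_left hNle (by positivity)
      have t2 : a*δ ≤ a*|k| := mul_le_mul_of_nonneg_left hcase.le ha0.le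
      have t3 : 0 ≤ |k| * Real.sin a * Real.cos a :=
        mul_nonneg (mul_nonneg (abs_nonneg k) hsin.le) hcos.le
      linarith
    have habsw : Complex.abs ((-((k:ℂ) + a*Complex.I)) * Complex.tanh ((k:ℂ)+a*Complex.I)) ≤ 2 := by
      have := abs_w_le ha0.le ha k
      linarith
    have h2 := csqrt_re_ge_im_div (u := (-((k:ℂ) + a*Complex.I)) * Complex.tanh ((k:ℂ)+a*Complex.I))
    refine le_trans (min_le_right _ _) (le_trans ?_ h2)
    have hsq2 : Real.sqrt (Complex.abs ((-((k:ℂ) + a*Complex.I)) * Complex.tanh ((k:ℂ)+a*Complex.I))) ≤ 3/2 := by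
      calc Real.sqrt (Complex.abs _) ≤ Real.sqrt 2 := Real.sqrt_le_sqrt habsw
        _ ≤ 3/2 := by
          rw [show (3:ℝ)/2 = Real.sqrt ((3/2)^2) by rw [Real.sqrt_sq]; norm_num]
          apply Real.sqrt_le_sqrt; norm_num
    calc a * δ / 12 = (a * δ / 4) / 3 := by ring
      _ ≤ |((-((k:ℂ) + a*Complex.I)) * Complex.tanh ((k:ℂ)+a*Complex.I)).im| / 3 := by
          apply div_le_div_of_nonneg_right him (by norm_num)
      _ ≤ |((-((k:ℂ) + a*Complex.I)) * Complex.tanh ((k:ℂ)+a*Complex.I)).im|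
          / (2 * Real.sqrt (Complex.abs ((-((k:ℂ) + a*Complex.I)) * Complex.tanh ((k:ℂ)+a*Complex.I)))) := by
          have hwne : ((-((k:ℂ) + a*Complex.I)) * Complex.tanh ((k:ℂ)+a*Complex.I)) ≠ 0 := by
            intro h0
            rw [h0] at him
            simp at him
            nlinarith [hδpos]
          have hsqpos : 0 < Real.sqrt (Complex.abs ((-((k:ℂ) + a*Complex.I)) * Complex.tanh ((k:ℂ)+a*Complex.I))) :=
            Real.sqrt_pos.2 (Complex.abs.pos hwne)
          apply div_le_div_of_nonneg_left (abs_nonneg _) (by linarith) (by linarith)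

-- ============ a = 0 (real) machinery ============

lemma real_tanh_le {x : ℝ} (hx : 0 ≤ x) : Real.tanh x ≤ x := by
  rw [Real.tanh_eq_sinh_div_cosh, div_le_iff₀ (Real.cosh_pos x)]
  exact sinh_le_mul_cosh hx

lemma real_abs_tanh_le_abs (x : ℝ) : |Real.tanh x| ≤ |x| := by
  rcases le_or_gt 0 x with hx | hx
  · rw [_root_.abs_of_nonneg hx, _root_.abs_of_nonneg]
    · exact real_tanh_le hx
    · rw [Real.tanh_eq_sinh_div_cosh]
      exact div_nonneg (Real.sinh_nonneg_iff.2 hx) (Real.cosh_pos x).le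
  · rw [_root_.abs_of_neg hx, _root_.abs_of_nonpos (by
      rw [Real.tanh_eq_sinh_div_cosh]
      exact div_nonpos_of_nonpos_of_nonneg (by simp [hx.le]) (Real.cosh_pos x).le)]
    have h := real_tanh_le (x := -x) (by linarith)
    rw [Real.tanh_neg] at h
    linarith

lemma real_tanh_sub (x y : ℝ) : Real.tanh x - Real.tanh y
    = Real.sinh (x - y) / (Real.cosh x * Real.cosh y) := by
  rw [Real.tanh_eq_sinh_div_cosh, Real.tanh_eq_sinh_div_cosh, Real.sinh_sub]
  field_simp [(Real.cosh_pos x).ne', (Real.cosh_pos y).ne']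
  try ring

lemma real_tanh_diff_le (x y : ℝ) : |Real.tanh x - Real.tanh y| ≤ 2 * |x - y| := by
  rw [real_tanh_sub, abs_div]
  have hc := mul_pos (Real.cosh_pos x) (Real.cosh_pos y)
  rw [div_le_iff₀ (by rw [abs_mul, _root_.abs_of_pos (Real.cosh_pos x), _root_.abs_of_pos (Real.cosh_pos y)]; exact hc)]
  rw [abs_mul, _root_.abs_of_pos (Real.cosh_pos x), _root_.abs_of_pos (Real.cosh_pos y)]
  have h1 := abs_sinh_le (x - y)
  have h2 := cosh_sub_le x y
  have h3 : |x - y| * Real.cosh (x - y) ≤ |x - y| * (2 * (Real.cosh x * Real.cosh y)) :=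
    mul_le_mul_of_nonneg_left h2 (abs_nonneg _)
  nlinarith [abs_nonneg (x-y)]

lemma cosh_two_le_four : Real.cosh 2 ≤ 4 := by
  rw [Real.cosh_eq]
  have he := Real.exp_one_lt_d9
  have he' := Real.exp_one_gt_d9
  have h2 : Real.exp (2:ℝ) = Real.exp 1 * Real.exp 1 := by
    rw [← Real.exp_add]; norm_num
  have h3 : Real.exp (-2:ℝ) = 1 / (Real.exp 1 * Real.exp 1) := by
    rw [← h2, Real.exp_neg]
    rw [inv_eq_one_div]
  rw [h2, h3]
  have hp : (0:ℝ) < Real.exp 1 * Real.exp 1 := by positivity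
  have hEub : Real.exp 1 * Real.exp 1 ≤ 7.39 := by nlinarith
  have hElb : (7.38:ℝ) ≤ Real.exp 1 * Real.exp 1 := by nlinarith
  have hinv : 1/(Real.exp 1 * Real.exp 1) ≤ 0.15 := by
    rw [div_le_iff₀ hp]
    nlinarith
  linarith

lemma mul_tanh_lower {t : ℝ} (ht : |t| ≤ 2) : t^2 / 4 ≤ t * Real.tanh t := by
  have key : ∀ u : ℝ, 0 ≤ u → u ≤ 2 → u^2/4 ≤ u * Real.tanh u := by
    intro u hu0 hu2
    have h1 : u ≤ Real.sinh u := Real.self_le_sinh_iff.2 hu0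
    have h2 : Real.cosh u ≤ 4 := by
      calc Real.cosh u ≤ Real.cosh 2 := by
            rw [Real.cosh_le_cosh]
            rw [_root_.abs_of_nonneg hu0]
            simpa using hu2
        _ ≤ 4 := cosh_two_le_four
    have h3 : u / 4 ≤ Real.tanh u := by
      rw [Real.tanh_eq_sinh_div_cosh, div_le_div_iff₀ (by norm_num) (Real.cosh_pos u)]
      nlinarith [Real.cosh_pos u]
    nlinarith
  rcases le_or_gt 0 t with ht0 | ht0
  · have := key t ht0 (by rwa [_root_.abs_of_nonneg ht0] at ht)
    linarith
  · have := key (-t) (by linarith) (by rwa [_root_.abs_of_neg ht0] at ht)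
    rw [Real.tanh_neg] at this
    nlinarith
  
lemma tanh_one_ge_half : 1/2 ≤ Real.tanh 1 := by
  rw [Real.tanh_eq_sinh_div_cosh, le_div_iff₀ (Real.cosh_pos 1), Real.sinh_eq, Real.cosh_eq]
  have he' := Real.exp_one_gt_d9
  have h3 : Real.exp (-1:ℝ) = 1/Real.exp 1 := by rw [Real.exp_neg, inv_eq_one_div]
  rw [h3]
  have h1 : 1/Real.exp 1 ≤ 0.37 := by
    rw [div_le_iff₀ (Real.exp_pos 1)]
    nlinarith
  linarith

lemma tanh_ge_tanh_one {x : ℝ} (hx : 1 ≤ x) : Real.tanh 1 ≤ Real.tanh x := by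
  have h := real_tanh_sub x 1
  have h1 : 0 ≤ Real.sinh (x - 1) := Real.sinh_nonneg_iff.2 (by linarith)
  have h2 : 0 < Real.cosh x * Real.cosh 1 := mul_pos (Real.cosh_pos x) (Real.cosh_pos 1)
  have : 0 ≤ Real.tanh x - Real.tanh 1 := by
    rw [h]
    positivity
  linarith

lemma mul_tanh_nonneg (t : ℝ) : 0 ≤ t * Real.tanh t := by
  rcases le_or_gt 0 t with ht | ht
  · apply mul_nonneg ht
    rw [Real.tanh_eq_sinh_div_cosh]
    exact div_nonneg (Real.sinh_nonneg_iff.2 ht) (Real.cosh_pos t).le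
  · have h1 : Real.tanh t ≤ 0 := by
      rw [Real.tanh_eq_sinh_div_cosh]
      exact div_nonpos_of_nonpos_of_nonneg (by simp [ht.le]) (Real.cosh_pos t).le
    nlinarith

lemma w_zero_a (k : ℝ) : (-((k:ℂ) + (0:ℝ)*Complex.I)) * Complex.tanh ((k:ℂ)+(0:ℝ)*Complex.I)
    = ((-(k * Real.tanh k) : ℝ) : ℂ) := by
  rw [show ((0:ℝ):ℂ) * Complex.I = 0 by simp, add_zero, ← Complex.ofReal_tanh]
  push_cast
  ring

lemma f_zero_a (k : ℝ) : csqrt ((-((k:ℂ) + (0:ℝ)*Complex.I)) * Complex.tanh ((k:ℂ)+(0:ℝ)*Complex.I))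
    = Complex.I * ((Real.sqrt (k * Real.tanh k) : ℝ) : ℂ) := by
  rw [w_zero_a, csqrt_neg_real (by linarith [mul_tanh_nonneg k]), neg_neg]

lemma g_lower_small {t : ℝ} (ht : |t| ≤ 2) : |t|/2 ≤ Real.sqrt (t * Real.tanh t) := by
  have h1 := mul_tanh_lower ht
  calc |t|/2 = Real.sqrt ((|t|/2)^2) := (Real.sqrt_sq (by positivity)).symm
    _ = Real.sqrt (t^2/4) := by rw [div_pow, _root_.sq_abs]; norm_num
    _ ≤ Real.sqrt (t * Real.tanh t) := Real.sqrt_le_sqrt h1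

lemma g_diff_identity (k khat : ℝ) :
    |k * Real.tanh k - khat * Real.tanh khat|
      = |Real.sqrt (k * Real.tanh k) - Real.sqrt (khat * Real.tanh khat)|
        * (Real.sqrt (k * Real.tanh k) + Real.sqrt (khat * Real.tanh khat)) := by
  have g1 : Real.sqrt (k * Real.tanh k) ^2 = k * Real.tanh k := Real.sq_sqrt (mul_tanh_nonneg k)
  have g2 : Real.sqrt (khat * Real.tanh khat) ^2 = khat * Real.tanh khat := Real.sq_sqrt (mul_tanh_nonneg khat)
  have e : k * Real.tanh k - khat * Real.tanh khat
      = (Real.sqrt (k * Real.tanh k) - Real.sqrt (khat * Real.tanh khat))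
        * (Real.sqrt (k * Real.tanh k) + Real.sqrt (khat * Real.tanh khat)) := by
    linear_combination g2 - g1
  rw [e, abs_mul, _root_.abs_of_nonneg (by positivity : (0:ℝ) ≤ Real.sqrt (k * Real.tanh k) + Real.sqrt (khat * Real.tanh khat))]

lemma sqrt_two_le : Real.sqrt 2 ≤ 3/2 := by
  rw [show (3:ℝ)/2 = Real.sqrt ((3/2)^2) by rw [Real.sqrt_sq]; norm_num]
  apply Real.sqrt_le_sqrt; norm_num

lemma caseB_a0 {k khat : ℝ} (hk : k ≠ khat) (hB : |k - khat| ≤ (1+|khat|)/2) :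
    Complex.abs (csqrt ((-((k:ℂ) + (0:ℝ)*Complex.I)) * Complex.tanh ((k:ℂ)+(0:ℝ)*Complex.I))
        - csqrt ((-((khat:ℂ) + (0:ℝ)*Complex.I)) * Complex.tanh ((khat:ℂ)+(0:ℝ)*Complex.I)))
      * Real.sqrt (1 + |khat|) ≤ 30 * |k - khat| := by
  set g : ℝ → ℝ := fun t => Real.sqrt (t * Real.tanh t) with hg
  have habs : Complex.abs (csqrt ((-((k:ℂ) + (0:ℝ)*Complex.I)) * Complex.tanh ((k:ℂ)+(0:ℝ)*Complex.I))
        - csqrt ((-((khat:ℂ) + (0:ℝ)*Complex.I)) * Complex.tanh ((khat:ℂ)+(0:ℝ)*Complex.I)))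
      = |g k - g khat| := by
    rw [f_zero_a, f_zero_a, ← mul_sub, map_mul, Complex.abs_I, one_mul,
      ← Complex.ofReal_sub, Complex.abs_ofReal]
  rw [habs]
  have hgk : 0 ≤ g k := Real.sqrt_nonneg _
  have hgkh : 0 ≤ g khat := Real.sqrt_nonneg _
  have hid := g_diff_identity k khat
  have hhpos : 0 < |k - khat| := by
    rw [abs_pos, sub_ne_zero]; exact hk
  rcases le_or_gt 1 |khat| with hbig | hsmall
  · -- |khat| ≥ 1
    have hwdiff : |k * Real.tanh k - khat * Real.tanh khat| ≤ 15 * |k - khat| := by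
      have := w_diff_bound (a := 0) le_rfl (by positivity) hB
      rw [w_zero_a, w_zero_a, ← Complex.ofReal_sub, Complex.abs_ofReal] at this
      rw [show -(k * Real.tanh k) - -(khat * Real.tanh khat)
        = -(k * Real.tanh k - khat * Real.tanh khat) by ring, abs_neg] at this
      exact this
    have hlow : Real.sqrt (1 + |khat|) / 2 ≤ g khat := by
      have h1 : (1 + |khat|)/4 ≤ khat * Real.tanh khat := by
        have e1 : khat * Real.tanh khat = |khat| * |Real.tanh khat| := by
          rw [← abs_mul, _root_.abs_of_nonneg (mul_tanh_nonneg khat)]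
        have e2 : |Real.tanh khat| = Real.tanh |khat| := by
          rcases le_or_gt 0 khat with h | h
          · rw [_root_.abs_of_nonneg h, _root_.abs_of_nonneg]
            rw [Real.tanh_eq_sinh_div_cosh]
            exact div_nonneg (Real.sinh_nonneg_iff.2 h) (Real.cosh_pos _).le
          · have hle : Real.tanh khat ≤ 0 := by
              rw [Real.tanh_eq_sinh_div_cosh]
              exact div_nonpos_of_nonpos_of_nonneg (by simp [h.le]) (Real.cosh_pos _).le
            rw [_root_.abs_of_nonpos hle, _root_.abs_of_neg h, Real.tanh_neg]
        have e3 : Real.tanh 1 ≤ Real.tanh |khat| := tanh_ge_tanh_one hbig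
        have e4 := tanh_one_ge_half
        rw [e1, e2]
        nlinarith
      calc Real.sqrt (1 + |khat|) / 2 = Real.sqrt ((1 + |khat|)/4) := by
            rw [show (1 + |khat|)/4 = (1+|khat|) * (1/4) by ring, Real.sqrt_mul (by positivity),
              show (1:ℝ)/4 = (1/2)^2 by norm_num, Real.sqrt_sq (by norm_num)]
            ring
        _ ≤ g khat := Real.sqrt_le_sqrt h1
    -- |g k - g khat| * s ≤ 2 * (|g k - g khat| * (g k + g khat)) = 2*|wdiff| ≤ 30 |h|
    have step : |g k - g khat| * Real.sqrt (1 + |khat|) ≤ 2 * (|g k - g khat| * (g k + g khat)) := by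
      have : Real.sqrt (1 + |khat|) ≤ 2 * (g k + g khat) := by
        linarith
      nlinarith [abs_nonneg (g k - g khat)]
    rw [← hid] at step
    linarith [step, hwdiff]
  · -- |khat| < 1
    have hh1 : |k - khat| ≤ 1 := by linarith
    have hkle : |k| ≤ 2 := by
      have := abs_sub_abs_le_abs_sub k khat
      linarith
    have hdiff : |k * Real.tanh k - khat * Real.tanh khat|
        ≤ |k - khat| * (2 * (|k| + |khat|)) := by
      have e : k * Real.tanh k - khat * Real.tanh khat
          = (k - khat) * Real.tanh k + khat * (Real.tanh k - Real.tanh khat) := by ring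
      rw [e]
      have t1 : |(k - khat) * Real.tanh k| ≤ |k - khat| * |k| := by
        rw [abs_mul]
        exact mul_le_mul_of_nonneg_left (real_abs_tanh_le_abs k) (abs_nonneg _)
      have t2 : |khat * (Real.tanh k - Real.tanh khat)| ≤ |khat| * (2 * |k - khat|) := by
        rw [abs_mul]
        exact mul_le_mul_of_nonneg_left (real_tanh_diff_le k khat) (abs_nonneg _)
      calc |(k - khat) * Real.tanh k + khat * (Real.tanh k - Real.tanh khat)|
          ≤ |(k - khat) * Real.tanh k| + |khat * (Real.tanh k - Real.tanh khat)| := abs_add_le _ _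
        _ ≤ |k - khat| * |k| + |khat| * (2 * |k - khat|) := by linarith
        _ ≤ |k - khat| * (2 * (|k| + |khat|)) := by nlinarith [abs_nonneg k, abs_nonneg khat, hhpos]
    have hglow : (|k| + |khat|)/2 ≤ g k + g khat := by
      have l1 := g_lower_small hkle
      have l2 := g_lower_small (t := khat) (by linarith)
      rw [hg]
      simp only []
      linarith
    have hmpos : 0 < |k| + |khat| := by
      rcases eq_or_ne k 0 with rfl | hk0
      · have : khat ≠ 0 := fun h => hk (by rw [h])
        have := abs_pos.2 this
        linarith [abs_nonneg (0:ℝ)]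
      · linarith [abs_pos.2 hk0, abs_nonneg khat]
    -- |g diff| ≤ 4 |h|
    have hgd : |g k - g khat| ≤ 4 * |k - khat| := by
      have step : |g k - g khat| * ((|k| + |khat|)/2) ≤ |k - khat| * (2 * (|k| + |khat|)) := by
        calc |g k - g khat| * ((|k| + |khat|)/2) ≤ |g k - g khat| * (g k + g khat) :=
              mul_le_mul_of_nonneg_left hglow (abs_nonneg _)
          _ = |k * Real.tanh k - khat * Real.tanh khat| := hid.symm
          _ ≤ |k - khat| * (2 * (|k| + |khat|)) := hdiff
      nlinarith [abs_nonneg (g k - g khat)]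
    have hsle : Real.sqrt (1 + |khat|) ≤ 3/2 := by
      calc Real.sqrt (1 + |khat|) ≤ Real.sqrt 2 := Real.sqrt_le_sqrt (by linarith)
        _ ≤ 3/2 := sqrt_two_le
    calc |g k - g khat| * Real.sqrt (1 + |khat|) ≤ (4 * |k - khat|) * (3/2) := by
          apply mul_le_mul hgd hsle (Real.sqrt_nonneg _) (by positivity)
      _ ≤ 30 * |k - khat| := by linarith

lemma caseB_apos {a : ℝ} (ha0 : 0 < a) (ha : a < π/4) {k khat : ℝ}
    (hB : |k - khat| ≤ (1+|khat|)/2) :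
    Complex.abs (csqrt ((-((k:ℂ) + a*Complex.I)) * Complex.tanh ((k:ℂ)+a*Complex.I))
        - csqrt ((-((khat:ℂ) + a*Complex.I)) * Complex.tanh ((khat:ℂ)+a*Complex.I)))
      * Real.sqrt (1 + |khat|)
    ≤ (15 / Real.sqrt (Real.sin a * (a / (1+a)))
        + 23 / min (Real.sqrt (a * Real.sin a * Real.cos a / 16))
            (a * (a * Real.sin a * Real.cos a / 8) / 12)) * |k - khat| := by
  have ha1 : a < 1 := by nlinarith [Real.pi_le_four, Real.pi_pos]
  have hsin : 0 < Real.sin a := Real.sin_pos_of_pos_of_lt_pi ha0 (by nlinarith [Real.pi_pos, Real.pi_le_four])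
  have hcos : 0 < Real.cos a := cos_a_pos ha0.le ha
  set u := csqrt ((-((k:ℂ) + a*Complex.I)) * Complex.tanh ((k:ℂ)+a*Complex.I)) with hu
  set v := csqrt ((-((khat:ℂ) + a*Complex.I)) * Complex.tanh ((khat:ℂ)+a*Complex.I)) with hv
  set c1 : ℝ := Real.sqrt (Real.sin a * (a / (1+a))) with hc1
  set c2 : ℝ := min (Real.sqrt (a * Real.sin a * Real.cos a / 16))
      (a * (a * Real.sin a * Real.cos a / 8) / 12) with hc2
  have hc1pos : 0 < c1 := Real.sqrt_pos.2 (by positivity)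
  have hc2pos : 0 < c2 := lt_min (Real.sqrt_pos.2 (by positivity)) (by positivity)
  have hident : Complex.abs (u - v) * Complex.abs (u + v)
      = Complex.abs ((-((k:ℂ) + a*Complex.I)) * Complex.tanh ((k:ℂ)+a*Complex.I)
        - (-((khat:ℂ) + a*Complex.I)) * Complex.tanh ((khat:ℂ)+a*Complex.I)) :=
    csqrt_diff_mul _ _
  have hwd := w_diff_bound ha0.le ha hB
  have hdiff_prod : Complex.abs (u - v) * Complex.abs (u + v) ≤ 15 * |k - khat| := by
    rw [hident]; exact hwd
  have hs1 : (1:ℝ) ≤ Real.sqrt (1 + |khat|) := by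
    have h := Real.sqrt_le_sqrt (show (1:ℝ) ≤ 1 + |khat| by linarith [abs_nonneg khat])
    rwa [Real.sqrt_one] at h
  have habsdnn : 0 ≤ Complex.abs (u - v) := Complex.abs.nonneg _
  -- case split on signs
  rcases le_or_gt 0 (k * khat) with hsign | hsign
  · -- same sign: |u+v| ≥ |v| ≥ c1 * sqrt(1+|khat|)
    have him : 0 ≤ u.im * v.im := by
      rcases lt_trichotomy k 0 with hk0 | hk0 | hk0
      · have hkh0 : khat ≤ 0 := by nlinarith
        have i1 : 0 ≤ u.im := csqrt_im_nonneg_of_im_nonneg (w_im_sign_nonpos_k ha0.le ha hk0.le)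
        have i2 : 0 ≤ v.im := csqrt_im_nonneg_of_im_nonneg (w_im_sign_nonpos_k ha0.le ha hkh0)
        exact mul_nonneg i1 i2
      · have i1 : u.im ≤ 0 := csqrt_im_nonpos (w_im_sign_nonneg_k ha0 ha hk0.ge)
        have i1' : 0 ≤ u.im := csqrt_im_nonneg_of_im_nonneg (w_im_sign_nonpos_k ha0.le ha hk0.le)
        have : u.im = 0 := le_antisymm i1 i1'
        rw [this, zero_mul]
      · have hkh0 : 0 ≤ khat := by nlinarith
        have i1 : u.im ≤ 0 := csqrt_im_nonpos (w_im_sign_nonneg_k ha0 ha hk0.le)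
        have i2 : v.im ≤ 0 := csqrt_im_nonpos (w_im_sign_nonneg_k ha0 ha hkh0)
        nlinarith
    have hlow : c1 * Real.sqrt (1 + |khat|) ≤ Complex.abs (u + v) := by
      have h1 : Complex.abs v ≤ Complex.abs (u + v) :=
        abs_add_ge_of_sign (csqrt_re_nonneg _) (csqrt_re_nonneg _) him
      have h2 : c1 * Real.sqrt (1 + |khat|) ≤ Complex.abs v := by
        rw [hv, abs_csqrt]
        have h3 := abs_w_ge ha0.le ha khat
        have h4 : Real.sin a * (a * (1+|khat|) / (1+a))
            = (Real.sin a * (a / (1+a))) * (1 + |khat|) := by ring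
        rw [h4] at h3
        calc c1 * Real.sqrt (1 + |khat|)
            = Real.sqrt ((Real.sin a * (a / (1+a))) * (1 + |khat|)) := by
              rw [hc1, ← Real.sqrt_mul (by positivity)]
          _ ≤ Real.sqrt (Complex.abs ((-((khat:ℂ) + a*Complex.I)) * Complex.tanh ((khat:ℂ)+a*Complex.I))) :=
              Real.sqrt_le_sqrt h3
      linarith
    have step : Complex.abs (u - v) * (c1 * Real.sqrt (1 + |khat|)) ≤ 15 * |k - khat| := by
      calc Complex.abs (u - v) * (c1 * Real.sqrt (1 + |khat|))
          ≤ Complex.abs (u - v) * Complex.abs (u + v) := mul_le_mul_of_nonneg_left hlow habsdnn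
        _ ≤ 15 * |k - khat| := hdiff_prod
    have final : Complex.abs (u - v) * Real.sqrt (1 + |khat|) ≤ (15 / c1) * |k - khat| := by
      rw [div_mul_eq_mul_div, le_div_iff₀ hc1pos]
      calc Complex.abs (u - v) * Real.sqrt (1 + |khat|) * c1
          = Complex.abs (u - v) * (c1 * Real.sqrt (1 + |khat|)) := by ring
        _ ≤ 15 * |k - khat| := step
    have hrest : 0 ≤ (23 / c2) * |k - khat| := by positivity
    calc Complex.abs (u - v) * Real.sqrt (1 + |khat|) ≤ (15 / c1) * |k - khat| := final
      _ ≤ (15 / c1 + 23 / c2) * |k - khat| := by nlinarith [hrest]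
  · -- opposite signs: both small
    have hops : |k - khat| = |k| + |khat| := by
      rcases le_or_gt 0 k with hk0 | hk0
      · have hkh0 : khat < 0 := by nlinarith
        rw [_root_.abs_of_nonneg hk0, _root_.abs_of_neg hkh0, _root_.abs_of_nonneg (by linarith)]
        ring
      · have hkh0 : 0 < khat := by nlinarith
        rw [_root_.abs_of_neg hk0, _root_.abs_of_pos hkh0, _root_.abs_of_nonpos (by linarith)]
        ring
    have hkh1 : |khat| ≤ 1 := by
      rw [hops] at hB
      linarith [abs_nonneg k]
    have hk1 : |k| ≤ 1 := by
      rw [hops] at hB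
      linarith [abs_nonneg khat]
    have hre : c2 ≤ Complex.abs (u + v) := by
      have r1 := re_f_lower ha0 ha hkh1
      have r2 := csqrt_re_nonneg ((-((k:ℂ) + a*Complex.I)) * Complex.tanh ((k:ℂ)+a*Complex.I))
      have r3 : (u + v).re ≤ Complex.abs (u + v) := Complex.re_le_abs _
      have r4 : (u + v).re = u.re + v.re := Complex.add_re u v
      rw [hc2]
      have := min_le_left (Real.sqrt (a * Real.sin a * Real.cos a / 16))
          (a * (a * Real.sin a * Real.cos a / 8) / 12)
      linarith [r1, r2, r3]
    have step : Complex.abs (u - v) * c2 ≤ 15 * |k - khat| := by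
      calc Complex.abs (u - v) * c2 ≤ Complex.abs (u - v) * Complex.abs (u + v) :=
            mul_le_mul_of_nonneg_left hre habsdnn
        _ ≤ 15 * |k - khat| := hdiff_prod
    have hsle : Real.sqrt (1 + |khat|) ≤ 3/2 := by
      calc Real.sqrt (1 + |khat|) ≤ Real.sqrt 2 := Real.sqrt_le_sqrt (by linarith)
        _ ≤ 3/2 := sqrt_two_le
    have habsd : Complex.abs (u - v) ≤ 15 * |k - khat| / c2 := by
      rw [le_div_iff₀ hc2pos]
      exact step
    have final : Complex.abs (u - v) * Real.sqrt (1 + |khat|) ≤ (23 / c2) * |k - khat| := by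
      calc Complex.abs (u - v) * Real.sqrt (1 + |khat|)
          ≤ (15 * |k - khat| / c2) * (3/2) :=
            mul_le_mul habsd hsle (Real.sqrt_nonneg _) (by positivity)
        _ = (22.5 / c2) * |k - khat| := by ring
        _ ≤ (23 / c2) * |k - khat| := by
            apply mul_le_mul_of_nonneg_right _ (abs_nonneg _)
            exact (div_le_div_iff_of_pos_right hc2pos).2 (by norm_num)
    have hrest : 0 ≤ (15 / c1) * |k - khat| := by positivity
    calc Complex.abs (u - v) * Real.sqrt (1 + |khat|) ≤ (23 / c2) * |k - khat| := final
      _ ≤ (15 / c1 + 23 / c2) * |k - khat| := by nlinarith [hrest]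

lemma caseA {a : ℝ} (ha0 : 0 ≤ a) (ha : a < π/4) {k khat : ℝ}
    (hA : (1+|khat|)/2 < |k - khat|) :
    Complex.abs (csqrt ((-((k:ℂ) + a*Complex.I)) * Complex.tanh ((k:ℂ)+a*Complex.I))
        - csqrt ((-((khat:ℂ) + a*Complex.I)) * Complex.tanh ((khat:ℂ)+a*Complex.I)))
      * Real.sqrt (1 + |khat|) ≤ 8 * |k - khat| := by
  set s := Real.sqrt (1 + |khat|) with hsdef
  set t := Real.sqrt |k - khat| with htdef
  have hs2 : s^2 = 1 + |khat| := Real.sq_sqrt (by positivity)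
  have ht2 : t^2 = |k - khat| := Real.sq_sqrt (abs_nonneg _)
  have hs0 : 0 ≤ s := Real.sqrt_nonneg _
  have ht0 : 0 ≤ t := Real.sqrt_nonneg _
  have hs1 : (1:ℝ) ≤ s := by
    have h := Real.sqrt_le_sqrt (show (1:ℝ) ≤ 1 + |khat| by linarith [abs_nonneg khat])
    rwa [Real.sqrt_one] at h
  have hfk : Complex.abs (csqrt ((-((k:ℂ) + a*Complex.I)) * Complex.tanh ((k:ℂ)+a*Complex.I)))
      ≤ s + t := by
    rw [abs_csqrt]
    have h1 : Complex.abs ((-((k:ℂ) + a*Complex.I)) * Complex.tanh ((k:ℂ)+a*Complex.I)) ≤ (s+t)^2 := by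
      have h2 := abs_w_le ha0 ha k
      have h3 : |k| ≤ |khat| + |k - khat| := by
        have := abs_sub_abs_le_abs_sub k khat
        linarith
      nlinarith [mul_nonneg hs0 ht0]
    calc Real.sqrt (Complex.abs ((-((k:ℂ) + a*Complex.I)) * Complex.tanh ((k:ℂ)+a*Complex.I)))
        ≤ Real.sqrt ((s+t)^2) := Real.sqrt_le_sqrt h1
      _ = s + t := Real.sqrt_sq (by linarith)
  have hfkh : Complex.abs (csqrt ((-((khat:ℂ) + a*Complex.I)) * Complex.tanh ((khat:ℂ)+a*Complex.I)))
      ≤ s := by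
    rw [abs_csqrt]
    have h1 := abs_w_le ha0 ha khat
    calc Real.sqrt (Complex.abs ((-((khat:ℂ) + a*Complex.I)) * Complex.tanh ((khat:ℂ)+a*Complex.I)))
        ≤ Real.sqrt (|khat| + 1) := Real.sqrt_le_sqrt h1
      _ = s := by rw [hsdef, add_comm]
  have htri := Complex.abs.sub_le_add
    (csqrt ((-((k:ℂ) + a*Complex.I)) * Complex.tanh ((k:ℂ)+a*Complex.I)))
    (csqrt ((-((khat:ℂ) + a*Complex.I)) * Complex.tanh ((khat:ℂ)+a*Complex.I)))
  have hk2 : s^2 ≤ 2 * t^2 := by rw [hs2, ht2]; linarith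
  have key : (2*s + t) * s ≤ 8 * t^2 := by nlinarith [sq_nonneg (s - t), sq_nonneg (s+t)]
  calc Complex.abs (csqrt ((-((k:ℂ) + a*Complex.I)) * Complex.tanh ((k:ℂ)+a*Complex.I))
        - csqrt ((-((khat:ℂ) + a*Complex.I)) * Complex.tanh ((khat:ℂ)+a*Complex.I))) * s
      ≤ ((s + t) + s) * s := by
        apply mul_le_mul_of_nonneg_right _ hs0
        linarith
    _ = (2*s + t) * s := by ring
    _ ≤ 8 * t^2 := key
    _ = 8 * |k - khat| := by rw [ht2]

/-- The function `Q(k) = √(−(k+ia) tanh(k+ia))` on `ℝ` (principal square root,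
`0 ≤ a < π/4`) satisfies the weighted Lipschitz estimate
`|Q(k) − Q(k̂)| ≤ K |k − k̂| / max(1, |k̂ + ia|^{1/2})`. -/
theorem Q_weighted_lipschitz (a : ℝ) (ha0 : 0 ≤ a) (ha : a < π / 4) :
    ∃ K : ℝ, ∀ k khat : ℝ,
      ‖(-((k : ℂ) + a * Complex.I) * Complex.tanh ((k : ℂ) + a * Complex.I)) ^ ((1 : ℂ) / 2) -
           (-((khat : ℂ) + a * Complex.I) * Complex.tanh ((khat : ℂ) + a * Complex.I)) ^ ((1 : ℂ) / 2)‖ ≤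
        K * |k - khat| / max 1 (Real.sqrt ‖(khat : ℂ) + a * Complex.I‖) := by
  show ∃ K : ℝ, ∀ k khat : ℝ,
        Complex.abs
            ((-((k : ℂ) + a * Complex.I) * Complex.tanh ((k : ℂ) + a * Complex.I)) ^ ((1 : ℂ) / 2) -
             (-((khat : ℂ) + a * Complex.I) * Complex.tanh ((khat : ℂ) + a * Complex.I)) ^ ((1 : ℂ) / 2)) ≤
          K * |k - khat| / max 1 (Real.sqrt (Complex.abs ((khat : ℂ) + a * Complex.I)))
  refine ⟨38 + (15 / Real.sqrt (Real.sin a * (a / (1+a)))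
      + 23 / min (Real.sqrt (a * Real.sin a * Real.cos a / 16))
          (a * (a * Real.sin a * Real.cos a / 8) / 12)), fun k khat => ?_⟩
  set K := 38 + (15 / Real.sqrt (Real.sin a * (a / (1+a)))
      + 23 / min (Real.sqrt (a * Real.sin a * Real.cos a / 16))
          (a * (a * Real.sin a * Real.cos a / 8) / 12)) with hK
  have hsin : 0 ≤ Real.sin a := sin_a_nonneg ha0 ha
  have hcos : 0 < Real.cos a := cos_a_pos ha0 ha
  have hKrest1 : 0 ≤ 15 / Real.sqrt (Real.sin a * (a / (1+a))) := by positivity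
  have hKrest2 : 0 ≤ 23 / min (Real.sqrt (a * Real.sin a * Real.cos a / 16))
      (a * (a * Real.sin a * Real.cos a / 8) / 12) := by
    apply div_nonneg (by norm_num)
    apply le_min (Real.sqrt_nonneg _)
    positivity
  have hK38 : 38 ≤ K := by rw [hK]; linarith
  rcases eq_or_ne k khat with rfl | hne
  · simp
  set M := max 1 (Real.sqrt (Complex.abs ((khat : ℂ) + a * Complex.I))) with hM
  have hM1 : (1:ℝ) ≤ M := le_max_left _ _
  have hMpos : (0:ℝ) < M := by linarith
  have hMle : M ≤ Real.sqrt (1 + |khat|) := by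
    apply max_le
    · have h := Real.sqrt_le_sqrt (show (1:ℝ) ≤ 1 + |khat| by linarith [abs_nonneg khat])
      rwa [Real.sqrt_one] at h
    · apply Real.sqrt_le_sqrt
      have := abs_z_le ha0 ha khat
      linarith
  rw [le_div_iff₀ hMpos]
  have hcsq : ∀ x : ℝ, (-((x:ℂ) + a*Complex.I) * Complex.tanh ((x:ℂ) + a*Complex.I)) ^ ((1:ℂ)/2)
      = csqrt ((-((x:ℂ) + a*Complex.I)) * Complex.tanh ((x:ℂ)+a*Complex.I)) := by
    intro x
    rfl
  rw [hcsq, hcsq]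
  set D := Complex.abs (csqrt ((-((k:ℂ) + a*Complex.I)) * Complex.tanh ((k:ℂ)+a*Complex.I))
      - csqrt ((-((khat:ℂ) + a*Complex.I)) * Complex.tanh ((khat:ℂ)+a*Complex.I))) with hD
  have hDnn : 0 ≤ D := Complex.abs.nonneg _
  have hDM : D * M ≤ D * Real.sqrt (1 + |khat|) := mul_le_mul_of_nonneg_left hMle hDnn
  rcases le_or_gt |k - khat| ((1+|khat|)/2) with hB | hA
  · -- case B
    rcases ha0.lt_or_eq with hpos | hzero
    · have h1 := caseB_apos hpos ha hB
      rw [← hD] at h1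
      have h2 : (15 / Real.sqrt (Real.sin a * (a / (1+a)))
          + 23 / min (Real.sqrt (a * Real.sin a * Real.cos a / 16))
              (a * (a * Real.sin a * Real.cos a / 8) / 12)) * |k - khat| ≤ K * |k - khat| := by
        apply mul_le_mul_of_nonneg_right _ (abs_nonneg _)
        rw [hK]
        linarith
      exact (hDM.trans h1).trans h2
    · -- a = 0
      subst hzero
      have h1 := caseB_a0 hne hB
      rw [← hD] at h1
      have h2 : 30 * |k - khat| ≤ K * |k - khat| := by
        apply mul_le_mul_of_nonneg_right _ (abs_nonneg _)
        linarith
      exact (hDM.trans h1).trans h2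
  · -- case A
    have h1 := caseA ha0 ha hA
    rw [← hD] at h1
    have h2 : 8 * |k - khat| ≤ K * |k - khat| := by
      apply mul_le_mul_of_nonneg_right _ (abs_nonneg _)
      linarith
    exact (hDM.trans h1).trans h2
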